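/- For every odd integer m ≥ 3, the graph obtained from C_m[4] by removing a suitable perfect matching I and adding, for each i ∈ Z_m, the six edges of a complete graph K_4 on the column {(a,i) : a ∈ Z_4}, admits a 2-factorization into two C_4-factors and three C_m-factors. Explicitly, with I = {{(0,i),(2,i+1)} : i ∈ Z_m} ∪ {{(3,i),(1,i+1)} : i ∈ Z_m}, the graph (C_m[4] − I) ⊕ mK_4 has a 2-factorization into two spanning unions of m disjoint 4-cycles and three spanning unions of four disjoint m-cycles. -/

import Mathlib

open SimpleGraph

/-- `F` is a decomposition of the graph `G` into edge-disjoint subgraphs. -/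
def IsDecompositionF {V : Type*} {n : ℕ} (G : SimpleGraph V) (F : Fin n → SimpleGraph V) : Prop :=
  (∀ i, F i ≤ G) ∧ (∀ i j, i ≠ j → F i ⊓ F j = ⊥) ∧ (⨆ i, F i) = G

/-- `H` is a `C_k`-factor of `G`: a spanning 2-regular subgraph all of whose
connected components have `k` vertices (hence are `k`-cycles). -/
def IsCnFactor {V : Type*} (G H : SimpleGraph V) (k : ℕ) : Prop :=
  H ≤ G ∧ (∀ v, (H.neighborSet v).ncard = 2) ∧
    ∀ v, (H.connectedComponentMk v).supp.ncard = k

/-- `H` is a perfect matching (1-factor) of `G`. -/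
def IsPM {V : Type*} (G H : SimpleGraph V) : Prop :=
  H ≤ G ∧ ∀ v, (H.neighborSet v).ncard = 1

/-- The lexicographic blow-up `C_m[4]`: the Cayley graph on `ZMod 4 × ZMod m`
with connection set `ZMod 4 × {1, -1}`. -/
def Cm4 (m : ℕ) : SimpleGraph (ZMod 4 × ZMod m) :=
  SimpleGraph.fromRel (fun u v => v.2 - u.2 = 1)

/-- The blow-up `G[k]`: replace every vertex by `k` independent vertices. -/
def blowup {V : Type*} (G : SimpleGraph V) (k : ℕ) : SimpleGraph (V × Fin k) where
  Adj u v := G.Adj u.1 v.1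
  symm := ⟨fun _ _ h => G.symm.symm _ _ h⟩
  loopless := ⟨fun u h => G.loopless.irrefl u.1 h⟩

/-- The explicit perfect matching `I` of `C_m[4]` with edges
`{(0,i),(2,i+1)}` and `{(3,i),(1,i+1)}` for `i ∈ Z_m`. -/
def Imatch (m : ℕ) : SimpleGraph (ZMod 4 × ZMod m) :=
  SimpleGraph.fromRel (fun u v =>
    ((u.1 = 0 ∧ v.1 = 2) ∨ (u.1 = 3 ∧ v.1 = 1)) ∧ v.2 = u.2 + 1)

/-- `m·K_4`: for each `i ∈ Z_m`, a complete graph on the column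
`{(a,i) : a ∈ Z_4}`. -/
def colK4 (m : ℕ) : SimpleGraph (ZMod 4 × ZMod m) :=
  SimpleGraph.fromRel (fun u v => u.2 = v.2)

namespace S6

abbrev pA (a b : ZMod 4) : Prop := (a = 1 ∧ b = 3) ∨ (a = 2 ∧ b = 0)
abbrev qA (a b : ZMod 4) : Prop := (a = 1 ∧ b = 2) ∨ (a = 0 ∧ b = 3)
abbrev qB (a b : ZMod 4) : Prop :=
  (a = 0 ∧ b = 1) ∨ (a = 1 ∧ b = 3) ∨ (a = 3 ∧ b = 2) ∨ (a = 2 ∧ b = 0)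
abbrev pI (a b : ZMod 4) : Prop := (a = 0 ∧ b = 2) ∨ (a = 3 ∧ b = 1)

variable {m : ℕ}

lemma one_ne (hm : 3 ≤ m) : (1 : ZMod m) ≠ 0 := by
  intro h
  rw [show ((1 : ZMod m)) = ((1 : ℕ) : ZMod m) by norm_num,
    ZMod.natCast_eq_zero_iff] at h
  exact absurd (Nat.le_of_dvd one_pos h) (by omega)

lemma two_ne (hm : 3 ≤ m) : (2 : ZMod m) ≠ 0 := by
  intro h
  rw [show ((2 : ZMod m)) = ((2 : ℕ) : ZMod m) by norm_num,
    ZMod.natCast_eq_zero_iff] at h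
  exact absurd (Nat.le_of_dvd two_pos h) (by omega)

lemma succ_ne (hm : 3 ≤ m) (i : ZMod m) : i + 1 ≠ i := by
  intro h; exact one_ne hm (by linear_combination h)

lemma val1 (hm : 3 ≤ m) : (1 : ZMod m).val = 1 := by
  haveI : Fact (1 < m) := ⟨by omega⟩
  exact ZMod.val_one m

lemma val2 (hm : 3 ≤ m) : (2 : ZMod m).val = 2 := by
  haveI : NeZero m := ⟨by omega⟩
  rw [show ((2 : ZMod m)) = ((2 : ℕ) : ZMod m) by norm_num]
  exact ZMod.val_cast_of_lt (by omega)

lemma val_neg_one_even (hm : 3 ≤ m) (hmo : Odd m) : Even ((-1 : ZMod m)).val := by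
  cases m with
  | zero => omega
  | succ n =>
    rw [ZMod.val_neg_one]
    rcases Nat.even_or_odd n with h | h
    · exact h
    · exact absurd hmo (by simp [Nat.even_add_one, Nat.odd_iff, Nat.even_iff] at h ⊢; omega)

lemma val_succ (hm : 3 ≤ m) {i : ZMod m} (h : i ≠ -1) : (i + 1).val = i.val + 1 := by
  haveI : NeZero m := ⟨by omega⟩
  have h2 : i.val + (1 : ZMod m).val < m := by
    rw [val1 hm]
    have hlt : i.val < m := ZMod.val_lt i
    rcases Nat.lt_or_ge (i.val + 1) m with h' | h'
    · exact h'
    · exfalso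
      apply h
      have : i.val = m - 1 := by omega
      have := ZMod.natCast_zmod_val i
      rw [this.symm, ‹i.val = m - 1›]
      push_cast [Nat.cast_sub (by omega : 1 ≤ m)]
      simp [ZMod.natCast_self]
  rw [← val1 hm (m := m)]
  exact ZMod.val_add_of_lt h2


/-! ### step functions -/

def dX (m : ℕ) (i : ZMod m) : ZMod 4 :=
  if i = 0 then 0 else if i = 1 then 1 else if Even i.val then 3 else 1
def dY (m : ℕ) (i : ZMod m) : ZMod 4 :=
  if i = 0 then 3 else if i = 1 then 0 else if Even i.val then 1 else 3
def dZ (m : ℕ) (i : ZMod m) : ZMod 4 :=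
  if i = 0 then 1 else if i = 1 then 3 else 0
def sX (m : ℕ) (i : ZMod m) : ZMod 4 :=
  if i = 0 then 0 else if Even i.val then 1 else 0
def sY (m : ℕ) (i : ZMod m) : ZMod 4 :=
  if i = 0 then 0 else if i = 1 then 3 else if Even i.val then 3 else 0
def sZ (m : ℕ) (i : ZMod m) : ZMod 4 :=
  if i = 1 then 1 else 0

lemma dkey (m : ℕ) (i : ZMod m) :
    (dX m i = 0 ∧ dY m i = 3 ∧ dZ m i = 1) ∨ (dX m i = 1 ∧ dY m i = 0 ∧ dZ m i = 3) ∨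
    (dX m i = 3 ∧ dY m i = 1 ∧ dZ m i = 0) ∨ (dX m i = 1 ∧ dY m i = 3 ∧ dZ m i = 0) := by
  unfold dX dY dZ
  split_ifs <;> decide

lemma neg_one_ne_zero' (hm : 3 ≤ m) : (-1 : ZMod m) ≠ 0 := by
  intro h; exact one_ne hm (by linear_combination -h)

lemma neg_one_ne_one' (hm : 3 ≤ m) : (-1 : ZMod m) ≠ 1 := by
  intro h; exact two_ne hm (by linear_combination -h)

lemma two_ne_zero'' (hm : 3 ≤ m) : (2 : ZMod m) ≠ 0 := two_ne hm
lemma two_ne_one'' (hm : 3 ≤ m) : (2 : ZMod m) ≠ 1 := by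
  intro h; exact one_ne hm (by linear_combination h)

section cocycle
variable (hm : 3 ≤ m) (hmo : Odd m)
include hm hmo

private lemma cocycle_cases (i : ZMod m)
    (P : Prop)
    (h0 : i = 0 → P) (h1 : i = 1 → P) (hneg : i = -1 → P)
    (hgen : i ≠ 0 → i ≠ 1 → i + 1 ≠ 0 → i + 1 ≠ 1 → (i + 1).val = i.val + 1 → P) : P := by
  by_cases c0 : i = 0
  · exact h0 c0
  by_cases c1 : i = 1
  · exact h1 c1
  by_cases cn : i = -1
  · exact hneg cn
  · refine hgen c0 c1 ?_ ?_ (val_succ hm cn)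
    · intro h; exact cn (by linear_combination h)
    · intro h; exact c0 (by linear_combination h)

lemma cX (i : ZMod m) : sX m (i + 1) = sX m i + dX m i := by
  refine cocycle_cases hm hmo i _ ?_ ?_ ?_ ?_
  · rintro rfl
    rw [zero_add]
    simp [sX, dX, one_ne hm, val1 hm]
  · rintro rfl
    rw [show (1 : ZMod m) + 1 = 2 by norm_num]
    simp [sX, dX, two_ne_zero'' hm, two_ne_one'' hm, one_ne hm, val2 hm, val1 hm]
  · rintro rfl
    rw [neg_add_cancel]
    simp [sX, dX, neg_one_ne_zero' hm, neg_one_ne_one' hm, val_neg_one_even hm hmo]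
    decide
  · intro c0 c1 cs0 cs1 hv
    rcases Nat.even_or_odd i.val with he | he
    · simp only [sX, dX, if_neg cs0, if_neg c0, if_neg c1, hv, Nat.even_add_one, he,
        not_true, if_false, if_true, if_pos he]
      decide
    · have he' := Nat.not_even_iff_odd.mpr he
      simp only [sX, dX, if_neg cs0, if_neg c0, if_neg c1, hv, Nat.even_add_one, he',
        not_false_iff, if_true, if_neg he']
      decide

lemma cY (i : ZMod m) : sY m (i + 1) = sY m i + dY m i := by
  refine cocycle_cases hm hmo i _ ?_ ?_ ?_ ?_
  · rintro rfl
    rw [zero_add]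
    simp [sY, dY, one_ne hm]
  · rintro rfl
    rw [show (1 : ZMod m) + 1 = 2 by norm_num]
    simp [sY, dY, two_ne_zero'' hm, two_ne_one'' hm, one_ne hm, val2 hm]
  · rintro rfl
    rw [neg_add_cancel]
    simp [sY, dY, neg_one_ne_zero' hm, neg_one_ne_one' hm, val_neg_one_even hm hmo,
      one_ne hm]
    decide
  · intro c0 c1 cs0 cs1 hv
    rcases Nat.even_or_odd i.val with he | he
    · simp only [sY, dY, if_neg cs0, if_neg cs1, if_neg c0, if_neg c1, hv, Nat.even_add_one, he,
        not_true, if_false, if_true, if_pos he]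
      decide
    · have he' := Nat.not_even_iff_odd.mpr he
      simp only [sY, dY, if_neg cs0, if_neg cs1, if_neg c0, if_neg c1, hv, Nat.even_add_one, he',
        not_false_iff, if_true, if_neg he']
      decide

lemma cZ (i : ZMod m) : sZ m (i + 1) = sZ m i + dZ m i := by
  refine cocycle_cases hm hmo i _ ?_ ?_ ?_ ?_
  · rintro rfl
    rw [zero_add]
    simp [sZ, dZ, one_ne hm, (show (0:ZMod m) ≠ 1 from fun h => one_ne hm h.symm)]
  · rintro rfl
    rw [show (1 : ZMod m) + 1 = 2 by norm_num]
    simp [sZ, dZ, two_ne_one'' hm, one_ne hm]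
    decide
  · rintro rfl
    rw [neg_add_cancel]
    simp [sZ, dZ, neg_one_ne_zero' hm, neg_one_ne_one' hm, one_ne hm,
      (show (0:ZMod m) ≠ 1 from fun h => one_ne hm h.symm)]
  · intro c0 c1 cs0 cs1 hv
    simp [sZ, dZ, c0, c1, cs0, cs1]

end cocycle

/-! ### the five factors -/

abbrev V' (m : ℕ) := ZMod 4 × ZMod m

def FA (m : ℕ) : SimpleGraph (V' m) :=
  SimpleGraph.fromRel (fun u v =>
    (v.2 = u.2 + 1 ∧ pA u.1 v.1) ∨ (v.2 = u.2 ∧ qA u.1 v.1))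

def FB (m : ℕ) : SimpleGraph (V' m) :=
  SimpleGraph.fromRel (fun u v => v.2 = u.2 ∧ qB u.1 v.1)

def FC (m : ℕ) (d : ZMod m → ZMod 4) : SimpleGraph (V' m) :=
  SimpleGraph.fromRel (fun u v => v.2 = u.2 + 1 ∧ v.1 = u.1 + d u.2)

section adj
variable (hm : 3 ≤ m)
include hm

lemma ne_of_snd_succ {u v : V' m} (h : v.2 = u.2 + 1) : u ≠ v := by
  rintro rfl; exact succ_ne hm u.2 h.symm

lemma FA_adj (u v : V' m) :
    (FA m).Adj u v ↔ (v.2 = u.2 + 1 ∧ pA u.1 v.1) ∨ (u.2 = v.2 + 1 ∧ pA v.1 u.1) ∨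
      (v.2 = u.2 ∧ (qA u.1 v.1 ∨ qA v.1 u.1)) := by
  rw [FA, SimpleGraph.fromRel_adj]
  constructor
  · rintro ⟨hne, (h | ⟨h1, h2⟩) | (h | ⟨h1, h2⟩)⟩
    · exact Or.inl h
    · exact Or.inr (Or.inr ⟨h1, Or.inl h2⟩)
    · exact Or.inr (Or.inl h)
    · exact Or.inr (Or.inr ⟨h1.symm, Or.inr h2⟩)
  · rintro (⟨h1, h2⟩ | ⟨h1, h2⟩ | ⟨h1, h2 | h2⟩)
    · exact ⟨ne_of_snd_succ hm h1, Or.inl (Or.inl ⟨h1, h2⟩)⟩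
    · exact ⟨(ne_of_snd_succ hm h1).symm, Or.inr (Or.inl ⟨h1, h2⟩)⟩
    · refine ⟨?_, Or.inl (Or.inr ⟨h1, h2⟩)⟩
      rintro rfl
      rcases h2 with ⟨e1, e2⟩ | ⟨e1, e2⟩ <;> rw [e1] at e2 <;> exact absurd e2 (by decide)
    · refine ⟨?_, Or.inr (Or.inr ⟨h1.symm, h2⟩)⟩
      rintro rfl
      rcases h2 with ⟨e1, e2⟩ | ⟨e1, e2⟩ <;> rw [e1] at e2 <;> exact absurd e2 (by decide)

lemma FB_adj (u v : V' m) :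
    (FB m).Adj u v ↔ v.2 = u.2 ∧ (qB u.1 v.1 ∨ qB v.1 u.1) := by
  rw [FB, SimpleGraph.fromRel_adj]
  constructor
  · rintro ⟨hne, ⟨h1, h2⟩ | ⟨h1, h2⟩⟩
    · exact ⟨h1, Or.inl h2⟩
    · exact ⟨h1.symm, Or.inr h2⟩
  · rintro ⟨h1, h2 | h2⟩
    · refine ⟨?_, Or.inl ⟨h1, h2⟩⟩
      rintro rfl
      rcases h2 with ⟨e1, e2⟩ | ⟨e1, e2⟩ | ⟨e1, e2⟩ | ⟨e1, e2⟩ <;> rw [e1] at e2 <;>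
        exact absurd e2 (by decide)
    · refine ⟨?_, Or.inr ⟨h1.symm, h2⟩⟩
      rintro rfl
      rcases h2 with ⟨e1, e2⟩ | ⟨e1, e2⟩ | ⟨e1, e2⟩ | ⟨e1, e2⟩ <;> rw [e1] at e2 <;>
        exact absurd e2 (by decide)

lemma FC_adj (d : ZMod m → ZMod 4) (u v : V' m) :
    (FC m d).Adj u v ↔ (v.2 = u.2 + 1 ∧ v.1 = u.1 + d u.2) ∨
      (u.2 = v.2 + 1 ∧ u.1 = v.1 + d v.2) := by
  rw [FC, SimpleGraph.fromRel_adj]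
  constructor
  · rintro ⟨hne, h | h⟩
    · exact Or.inl h
    · exact Or.inr h
  · rintro (⟨h1, h2⟩ | ⟨h1, h2⟩)
    · exact ⟨ne_of_snd_succ hm h1, Or.inl ⟨h1, h2⟩⟩
    · exact ⟨(ne_of_snd_succ hm h1).symm, Or.inr ⟨h1, h2⟩⟩

lemma Cm4_adj (u v : V' m) :
    (Cm4 m).Adj u v ↔ (v.2 = u.2 + 1) ∨ (u.2 = v.2 + 1) := by
  rw [Cm4, SimpleGraph.fromRel_adj]
  constructor
  · rintro ⟨hne, h | h⟩
    · exact Or.inl (by linear_combination h)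
    · exact Or.inr (by linear_combination h)
  · rintro (h | h)
    · exact ⟨ne_of_snd_succ hm h, Or.inl (by linear_combination h)⟩
    · exact ⟨(ne_of_snd_succ hm h).symm, Or.inr (by linear_combination h)⟩

lemma Imatch_adj (u v : V' m) :
    (Imatch m).Adj u v ↔ (v.2 = u.2 + 1 ∧ pI u.1 v.1) ∨ (u.2 = v.2 + 1 ∧ pI v.1 u.1) := by
  rw [Imatch, SimpleGraph.fromRel_adj]
  constructor
  · rintro ⟨hne, ⟨h2, h1⟩ | ⟨h2, h1⟩⟩
    · exact Or.inl ⟨h1, h2⟩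
    · exact Or.inr ⟨h1, h2⟩
  · rintro (⟨h1, h2⟩ | ⟨h1, h2⟩)
    · exact ⟨ne_of_snd_succ hm h1, Or.inl ⟨h2, h1⟩⟩
    · exact ⟨(ne_of_snd_succ hm h1).symm, Or.inr ⟨h2, h1⟩⟩

lemma colK4_adj (u v : V' m) :
    (colK4 m).Adj u v ↔ v.2 = u.2 ∧ u.1 ≠ v.1 := by
  rw [colK4, SimpleGraph.fromRel_adj]
  constructor
  · rintro ⟨hne, h | h⟩
    · exact ⟨h.symm, fun he => hne (Prod.ext he h)⟩
    · exact ⟨h, fun he => hne (Prod.ext he h.symm)⟩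
  · rintro ⟨h1, h2⟩
    exact ⟨fun he => h2 (congrArg Prod.fst he), Or.inl h1.symm⟩

lemma excFB {i j : ZMod m} (h1 : j = i + 1) (h2 : i = j + 1) : False :=
  two_ne hm (by linear_combination -h1 - h2)

lemma excFS {i j : ZMod m} (h1 : j = i + 1) (h2 : j = i) : False :=
  one_ne hm (by linear_combination h2 - h1)

lemma G_adj (u v : V' m) :
    ((Cm4 m \ Imatch m) ⊔ colK4 m).Adj u v ↔
      (v.2 = u.2 + 1 ∧ ¬ pI u.1 v.1) ∨ (u.2 = v.2 + 1 ∧ ¬ pI v.1 u.1) ∨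
      (v.2 = u.2 ∧ u.1 ≠ v.1) := by
  rw [SimpleGraph.sup_adj, SimpleGraph.sdiff_adj, Cm4_adj hm, Imatch_adj hm, colK4_adj hm]
  constructor
  · rintro (⟨hf | hb, hnI⟩ | hc)
    · exact Or.inl ⟨hf, fun hp => hnI (Or.inl ⟨hf, hp⟩)⟩
    · exact Or.inr (Or.inl ⟨hb, fun hp => hnI (Or.inr ⟨hb, hp⟩)⟩)
    · exact Or.inr (Or.inr hc)
  · rintro (⟨h, hp⟩ | ⟨h, hp⟩ | hc)
    · refine Or.inl ⟨Or.inl h, ?_⟩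
      rintro (⟨h1, p1⟩ | ⟨h1, p1⟩)
      · exact hp p1
      · exact excFB hm h h1
    · refine Or.inl ⟨Or.inr h, ?_⟩
      rintro (⟨h1, p1⟩ | ⟨h1, p1⟩)
      · exact excFB hm h1 h
      · exact hp p1
    · exact Or.inr hc

end adj

/-! ### generic component helpers -/

lemma supp_eq {W : Type*} (H : SimpleGraph W) (v : W) (S : Set W)
    (hv : v ∈ S) (hcl : ∀ x ∈ S, ∀ y, H.Adj x y → y ∈ S)
    (hre : ∀ w ∈ S, H.Reachable v w) :
    (H.connectedComponentMk v).supp = S := by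
  have key : ∀ x y, (p : H.Walk x y) → x ∈ S → y ∈ S := by
    intro x y p
    induction p with
    | nil => exact id
    | cons h p ih => exact fun hx => ih (hcl _ hx _ h)
  ext w
  simp only [ConnectedComponent.mem_supp_iff, ConnectedComponent.eq]
  constructor
  · intro h
    obtain ⟨p⟩ := h.symm
    exact key v w p hv
  · intro h
    exact (hre w h).symm

lemma ncard4 {α : Type*} {a b c d : α} (hab : a ≠ b) (hac : a ≠ c) (had : a ≠ d)
    (hbc : b ≠ c) (hbd : b ≠ d) (hcd : c ≠ d) : ({a, b, c, d} : Set α).ncard = 4 := by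
  rw [Set.ncard_insert_of_notMem (by simp [hab, hac, had]) (Set.toFinite _),
    Set.ncard_insert_of_notMem (by simp [hbc, hbd]) (Set.toFinite _),
    Set.ncard_pair hcd]

/-! ### subgraph facts -/

section main
variable (hm : 3 ≤ m) (hmo : Odd m)
include hm

lemma dX_vals (i : ZMod m) : dX m i = 0 ∨ dX m i = 1 ∨ dX m i = 3 := by
  rcases dkey m i with h | h | h | h <;> rw [h.1] <;> simp
lemma dY_vals (i : ZMod m) : dY m i = 0 ∨ dY m i = 1 ∨ dY m i = 3 := by
  rcases dkey m i with h | h | h | h <;> rw [h.2.1] <;> simp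
lemma dZ_vals (i : ZMod m) : dZ m i = 0 ∨ dZ m i = 1 ∨ dZ m i = 3 := by
  rcases dkey m i with h | h | h | h <;> rw [h.2.2] <;> simp

omit hm in
lemma dX_vals' (i : ZMod m) : dX m i = 0 ∨ dX m i = 1 ∨ dX m i = 3 := by
  rcases dkey m i with h | h | h | h <;> rw [h.1] <;> simp

lemma FA_le : FA m ≤ (Cm4 m \ Imatch m) ⊔ colK4 m := by
  intro u v h
  rw [FA_adj hm] at h
  rw [G_adj hm]
  rcases h with ⟨h1, h2⟩ | ⟨h1, h2⟩ | ⟨h1, h2⟩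
  · refine Or.inl ⟨h1, ?_⟩
    have : ∀ a b : ZMod 4, pA a b → ¬ pI a b := by decide
    exact this u.1 v.1 h2
  · exact Or.inr (Or.inl ⟨h1, by
      have : ∀ a b : ZMod 4, pA a b → ¬ pI a b := by decide
      exact this v.1 u.1 h2⟩)
  · refine Or.inr (Or.inr ⟨h1, ?_⟩)
    have : ∀ a b : ZMod 4, (qA a b ∨ qA b a) → a ≠ b := by decide
    exact this u.1 v.1 h2

lemma FB_le : FB m ≤ (Cm4 m \ Imatch m) ⊔ colK4 m := by
  intro u v h
  rw [FB_adj hm] at h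
  rw [G_adj hm]
  refine Or.inr (Or.inr ⟨h.1, ?_⟩)
  have : ∀ a b : ZMod 4, (qB a b ∨ qB b a) → a ≠ b := by decide
  exact this u.1 v.1 h.2

lemma FC_le (d : ZMod m → ZMod 4) (hd : ∀ i, d i = 0 ∨ d i = 1 ∨ d i = 3) :
    FC m d ≤ (Cm4 m \ Imatch m) ⊔ colK4 m := by
  intro u v h
  rw [FC_adj hm] at h
  rw [G_adj hm]
  have key : ∀ (a b c : ZMod 4), (c = 0 ∨ c = 1 ∨ c = 3) → b = a + c → ¬ pI a b := by decide
  rcases h with ⟨h1, h2⟩ | ⟨h1, h2⟩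
  · exact Or.inl ⟨h1, key u.1 v.1 _ (hd u.2) h2⟩
  · exact Or.inr (Or.inl ⟨h1, key v.1 u.1 _ (hd v.2) h2⟩)


lemma dXY_ne (i : ZMod m) : dX m i ≠ dY m i := by
  rcases dkey m i with h | h | h | h <;> rw [h.1, h.2.1] <;> decide
lemma dXZ_ne (i : ZMod m) : dX m i ≠ dZ m i := by
  rcases dkey m i with h | h | h | h <;> rw [h.1, h.2.2] <;> decide
lemma dYZ_ne (i : ZMod m) : dY m i ≠ dZ m i := by
  rcases dkey m i with h | h | h | h <;> rw [h.2.1, h.2.2] <;> decide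

lemma HAB (u v : V' m) : (FA m).Adj u v → (FB m).Adj u v → False := by
  rw [FA_adj hm, FB_adj hm]
  rintro (⟨h1, h2⟩ | ⟨h1, h2⟩ | ⟨h1, h2⟩) ⟨h3, h4⟩
  · exact excFS hm h1 h3
  · exact excFS hm h1 h3.symm
  · have : ∀ a b : ZMod 4, (qA a b ∨ qA b a) → (qB a b ∨ qB b a) → False := by decide
    exact this u.1 v.1 h2 h4

lemma HAC (d : ZMod m → ZMod 4) (hd : ∀ i, d i = 0 ∨ d i = 1 ∨ d i = 3)
    (u v : V' m) : (FA m).Adj u v → (FC m d).Adj u v → False := by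
  rw [FA_adj hm, FC_adj hm]
  have key : ∀ (a b c : ZMod 4), (c = 0 ∨ c = 1 ∨ c = 3) → pA a b → b = a + c → False := by
    decide
  rintro (⟨h1, h2⟩ | ⟨h1, h2⟩ | ⟨h1, h2⟩) (⟨h3, h4⟩ | ⟨h3, h4⟩)
  · exact key u.1 v.1 _ (hd u.2) h2 h4
  · exact excFB hm h1 h3
  · exact excFB hm h3 h1
  · exact key v.1 u.1 _ (hd v.2) h2 h4
  · exact excFS hm h3 h1
  · exact excFS hm (h3.trans (congrArg (· + 1) h1)) rfl

lemma HBC (d : ZMod m → ZMod 4) (u v : V' m) :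
    (FB m).Adj u v → (FC m d).Adj u v → False := by
  rw [FB_adj hm, FC_adj hm]
  rintro ⟨h1, h2⟩ (⟨h3, h4⟩ | ⟨h3, h4⟩)
  · exact excFS hm h3 h1
  · exact excFS hm (h3.trans (congrArg (· + 1) h1)) rfl

lemma HCC (d d' : ZMod m → ZMod 4) (hdd : ∀ i, d i ≠ d' i) (u v : V' m) :
    (FC m d).Adj u v → (FC m d').Adj u v → False := by
  rw [FC_adj hm, FC_adj hm]
  rintro (⟨h1, h2⟩ | ⟨h1, h2⟩) (⟨h3, h4⟩ | ⟨h3, h4⟩)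
  · exact hdd u.2 (by linear_combination h4 - h2)
  · exact excFB hm h1 h3
  · exact excFB hm h3 h1
  · exact hdd v.2 (by linear_combination h4 - h2)

lemma cover (u v : V' m) (h : ((Cm4 m \ Imatch m) ⊔ colK4 m).Adj u v) :
    (FA m).Adj u v ∨ (FB m).Adj u v ∨ (FC m (dX m)).Adj u v ∨ (FC m (dY m)).Adj u v ∨
      (FC m (dZ m)).Adj u v := by
  rw [G_adj hm] at h
  rw [FA_adj hm, FB_adj hm, FC_adj hm, FC_adj hm, FC_adj hm]
  have key : ∀ a b : ZMod 4, ¬ pI a b → (pA a b ∨ b = a + 0 ∨ b = a + 1 ∨ b = a + 3) := by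
    decide
  have colkey : ∀ a b : ZMod 4, a ≠ b → ((qA a b ∨ qA b a) ∨ (qB a b ∨ qB b a)) := by
    decide
  have pick : ∀ (i : ZMod m) (a b : ZMod 4), ¬ pI a b →
      (pA a b ∨ b = a + dX m i ∨ b = a + dY m i ∨ b = a + dZ m i) := by
    intro i a b hp
    rcases key a b hp with h | h | h | h
    · exact Or.inl h
    · rcases dkey m i with hk | hk | hk | hk
      · exact Or.inr (Or.inl (by rw [hk.1]; exact h))
      · exact Or.inr (Or.inr (Or.inl (by rw [hk.2.1]; exact h)))
      · exact Or.inr (Or.inr (Or.inr (by rw [hk.2.2]; exact h)))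
      · exact Or.inr (Or.inr (Or.inr (by rw [hk.2.2]; exact h)))
    · rcases dkey m i with hk | hk | hk | hk
      · exact Or.inr (Or.inr (Or.inr (by rw [hk.2.2]; exact h)))
      · exact Or.inr (Or.inl (by rw [hk.1]; exact h))
      · exact Or.inr (Or.inr (Or.inl (by rw [hk.2.1]; exact h)))
      · exact Or.inr (Or.inl (by rw [hk.1]; exact h))
    · rcases dkey m i with hk | hk | hk | hk
      · exact Or.inr (Or.inr (Or.inl (by rw [hk.2.1]; exact h)))
      · exact Or.inr (Or.inr (Or.inr (by rw [hk.2.2]; exact h)))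
      · exact Or.inr (Or.inl (by rw [hk.1]; exact h))
      · exact Or.inr (Or.inr (Or.inl (by rw [hk.2.1]; exact h)))
  rcases h with ⟨h1, h2⟩ | ⟨h1, h2⟩ | ⟨h1, h2⟩
  · rcases pick u.2 u.1 v.1 h2 with h | h | h | h
    · exact Or.inl (Or.inl ⟨h1, h⟩)
    · exact Or.inr (Or.inr (Or.inl (Or.inl ⟨h1, h⟩)))
    · exact Or.inr (Or.inr (Or.inr (Or.inl (Or.inl ⟨h1, h⟩))))
    · exact Or.inr (Or.inr (Or.inr (Or.inr (Or.inl ⟨h1, h⟩))))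
  · rcases pick v.2 v.1 u.1 h2 with h | h | h | h
    · exact Or.inl (Or.inr (Or.inl ⟨h1, h⟩))
    · exact Or.inr (Or.inr (Or.inl (Or.inr ⟨h1, h⟩)))
    · exact Or.inr (Or.inr (Or.inr (Or.inl (Or.inr ⟨h1, h⟩))))
    · exact Or.inr (Or.inr (Or.inr (Or.inr (Or.inr ⟨h1, h⟩))))
  · rcases colkey u.1 v.1 h2 with h | h
    · exact Or.inl (Or.inr (Or.inr ⟨h1, h⟩))
    · exact Or.inr (Or.inl ⟨h1, h⟩)


omit hm in
lemma back_iff {i j : ZMod m} : i = j + 1 ↔ j = i - 1 :=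
  ⟨fun h => by rw [h]; ring, fun h => by rw [h]; ring⟩

omit hm in
lemma zmod4_cases (a : ZMod 4) : a = 0 ∨ a = 1 ∨ a = 2 ∨ a = 3 := by revert a; decide

/-! ### neighbor sets -/

lemma FC_nb (d : ZMod m → ZMod 4) (v : V' m) :
    (FC m d).neighborSet v = {(v.1 + d v.2, v.2 + 1), (v.1 - d (v.2 - 1), v.2 - 1)} := by
  ext w
  rw [SimpleGraph.mem_neighborSet, FC_adj hm]
  simp only [Set.mem_insert_iff, Set.mem_singleton_iff, Prod.ext_iff]
  constructor
  · rintro (⟨h1, h2⟩ | ⟨h1, h2⟩)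
    · exact Or.inl ⟨h2, h1⟩
    · refine Or.inr ⟨?_, by rw [h1]; ring⟩
      rw [show w.2 = v.2 - 1 from by rw [h1]; ring] at h2
      linear_combination -h2
  · rintro (⟨h2, h1⟩ | ⟨h2, h1⟩)
    · exact Or.inl ⟨h1, h2⟩
    · refine Or.inr ⟨by rw [h1]; ring, ?_⟩
      rw [h2, h1]; ring

lemma FC_deg (d : ZMod m → ZMod 4) (v : V' m) : ((FC m d).neighborSet v).ncard = 2 := by
  rw [FC_nb hm d v, Set.ncard_pair]
  intro h
  have h2 := congrArg Prod.snd h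
  simp only at h2
  exact two_ne hm (by linear_combination h2)

lemma FA_nb0 (i : ZMod m) :
    (FA m).neighborSet (0, i) = {((3 : ZMod 4), i), ((2 : ZMod 4), i - 1)} := by
  ext ⟨b, j⟩
  rw [SimpleGraph.mem_neighborSet, FA_adj hm]
  simp only [Set.mem_insert_iff, Set.mem_singleton_iff, Prod.mk.injEq]
  have e1 : ∀ x : ZMod 4, pA 0 x ↔ False := by decide
  have e2 : ∀ x : ZMod 4, pA x 0 ↔ x = 2 := by decide
  have e3 : ∀ x : ZMod 4, (qA 0 x ∨ qA x 0) ↔ x = 3 := by decide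
  rw [e1, e2, e3, show i = j + 1 ↔ j = i - 1 from back_iff]
  tauto

lemma FA_nb1 (i : ZMod m) :
    (FA m).neighborSet (1, i) = {((2 : ZMod 4), i), ((3 : ZMod 4), i + 1)} := by
  ext ⟨b, j⟩
  rw [SimpleGraph.mem_neighborSet, FA_adj hm]
  simp only [Set.mem_insert_iff, Set.mem_singleton_iff, Prod.mk.injEq]
  have e1 : ∀ x : ZMod 4, pA 1 x ↔ x = 3 := by decide
  have e2 : ∀ x : ZMod 4, pA x 1 ↔ False := by decide
  have e3 : ∀ x : ZMod 4, (qA 1 x ∨ qA x 1) ↔ x = 2 := by decide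
  rw [e1, e2, e3]
  tauto

lemma FA_nb2 (i : ZMod m) :
    (FA m).neighborSet (2, i) = {((1 : ZMod 4), i), ((0 : ZMod 4), i + 1)} := by
  ext ⟨b, j⟩
  rw [SimpleGraph.mem_neighborSet, FA_adj hm]
  simp only [Set.mem_insert_iff, Set.mem_singleton_iff, Prod.mk.injEq]
  have e1 : ∀ x : ZMod 4, pA 2 x ↔ x = 0 := by decide
  have e2 : ∀ x : ZMod 4, pA x 2 ↔ False := by decide
  have e3 : ∀ x : ZMod 4, (qA 2 x ∨ qA x 2) ↔ x = 1 := by decide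
  rw [e1, e2, e3]
  tauto

lemma FA_nb3 (i : ZMod m) :
    (FA m).neighborSet (3, i) = {((0 : ZMod 4), i), ((1 : ZMod 4), i - 1)} := by
  ext ⟨b, j⟩
  rw [SimpleGraph.mem_neighborSet, FA_adj hm]
  simp only [Set.mem_insert_iff, Set.mem_singleton_iff, Prod.mk.injEq]
  have e1 : ∀ x : ZMod 4, pA 3 x ↔ False := by decide
  have e2 : ∀ x : ZMod 4, pA x 3 ↔ x = 1 := by decide
  have e3 : ∀ x : ZMod 4, (qA 3 x ∨ qA x 3) ↔ x = 0 := by decide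
  rw [e1, e2, e3, show i = j + 1 ↔ j = i - 1 from back_iff]
  tauto

lemma FA_deg (v : V' m) : ((FA m).neighborSet v).ncard = 2 := by
  obtain ⟨a, i⟩ := v
  rcases zmod4_cases a with rfl | rfl | rfl | rfl
  · rw [FA_nb0 hm i]
    refine Set.ncard_pair (fun h => ?_)
    have h' : (3 : ZMod 4) = 2 := congrArg Prod.fst h
    exact absurd h' (by decide)
  · rw [FA_nb1 hm i]
    refine Set.ncard_pair (fun h => ?_)
    have h' : (2 : ZMod 4) = 3 := congrArg Prod.fst h
    exact absurd h' (by decide)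
  · rw [FA_nb2 hm i]
    refine Set.ncard_pair (fun h => ?_)
    have h' : (1 : ZMod 4) = 0 := congrArg Prod.fst h
    exact absurd h' (by decide)
  · rw [FA_nb3 hm i]
    refine Set.ncard_pair (fun h => ?_)
    have h' : (0 : ZMod 4) = 1 := congrArg Prod.fst h
    exact absurd h' (by decide)

lemma FB_nb (a : ZMod 4) (i : ZMod m) (b c : ZMod 4)
    (hb : ∀ x : ZMod 4, (qB a x ∨ qB x a) ↔ (x = b ∨ x = c)) :
    (FB m).neighborSet (a, i) = {(b, i), (c, i)} := by
  ext ⟨x, j⟩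
  rw [SimpleGraph.mem_neighborSet, FB_adj hm]
  simp only [Set.mem_insert_iff, Set.mem_singleton_iff, Prod.mk.injEq]
  rw [hb]
  tauto

lemma FB_deg (v : V' m) : ((FB m).neighborSet v).ncard = 2 := by
  obtain ⟨a, i⟩ := v
  rcases zmod4_cases a with rfl | rfl | rfl | rfl
  · rw [FB_nb hm 0 i 1 2 (by decide)]
    refine Set.ncard_pair (fun h => ?_)
    have h' : (1 : ZMod 4) = 2 := congrArg Prod.fst h
    exact absurd h' (by decide)
  · rw [FB_nb hm 1 i 0 3 (by decide)]
    refine Set.ncard_pair (fun h => ?_)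
    have h' : (0 : ZMod 4) = 3 := congrArg Prod.fst h
    exact absurd h' (by decide)
  · rw [FB_nb hm 2 i 3 0 (by decide)]
    refine Set.ncard_pair (fun h => ?_)
    have h' : (3 : ZMod 4) = 0 := congrArg Prod.fst h
    exact absurd h' (by decide)
  · rw [FB_nb hm 3 i 1 2 (by decide)]
    refine Set.ncard_pair (fun h => ?_)
    have h' : (1 : ZMod 4) = 2 := congrArg Prod.fst h
    exact absurd h' (by decide)

/-! ### the perfect matching -/

lemma Imatch_le : Imatch m ≤ Cm4 m := by
  intro u v h
  rw [Imatch_adj hm] at h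
  rw [Cm4_adj hm]
  rcases h with ⟨h1, _⟩ | ⟨h1, _⟩
  · exact Or.inl h1
  · exact Or.inr h1

lemma Imatch_deg (v : V' m) : ((Imatch m).neighborSet v).ncard = 1 := by
  obtain ⟨a, i⟩ := v
  rcases zmod4_cases a with rfl | rfl | rfl | rfl
  · have : (Imatch m).neighborSet (0, i) = {((2 : ZMod 4), i + 1)} := by
      ext ⟨b, j⟩
      rw [SimpleGraph.mem_neighborSet, Imatch_adj hm]
      simp only [Set.mem_singleton_iff, Prod.mk.injEq]
      have e1 : ∀ x : ZMod 4, pI 0 x ↔ x = 2 := by decide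
      have e2 : ∀ x : ZMod 4, pI x 0 ↔ False := by decide
      rw [e1, e2]
      tauto
    rw [this, Set.ncard_singleton]
  · have : (Imatch m).neighborSet (1, i) = {((3 : ZMod 4), i - 1)} := by
      ext ⟨b, j⟩
      rw [SimpleGraph.mem_neighborSet, Imatch_adj hm]
      simp only [Set.mem_singleton_iff, Prod.mk.injEq]
      have e1 : ∀ x : ZMod 4, pI 1 x ↔ False := by decide
      have e2 : ∀ x : ZMod 4, pI x 1 ↔ x = 3 := by decide
      rw [e1, e2, show i = j + 1 ↔ j = i - 1 from back_iff]
      tauto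
    rw [this, Set.ncard_singleton]
  · have : (Imatch m).neighborSet (2, i) = {((0 : ZMod 4), i - 1)} := by
      ext ⟨b, j⟩
      rw [SimpleGraph.mem_neighborSet, Imatch_adj hm]
      simp only [Set.mem_singleton_iff, Prod.mk.injEq]
      have e1 : ∀ x : ZMod 4, pI 2 x ↔ False := by decide
      have e2 : ∀ x : ZMod 4, pI x 2 ↔ x = 0 := by decide
      rw [e1, e2, show i = j + 1 ↔ j = i - 1 from back_iff]
      tauto
    rw [this, Set.ncard_singleton]
  · have : (Imatch m).neighborSet (3, i) = {((1 : ZMod 4), i + 1)} := by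
      ext ⟨b, j⟩
      rw [SimpleGraph.mem_neighborSet, Imatch_adj hm]
      simp only [Set.mem_singleton_iff, Prod.mk.injEq]
      have e1 : ∀ x : ZMod 4, pI 3 x ↔ x = 1 := by decide
      have e2 : ∀ x : ZMod 4, pI x 3 ↔ False := by decide
      rw [e1, e2]
      tauto
    rw [this, Set.ncard_singleton]


/-! ### components of the C_m factors -/

lemma FC_supp_ncard (d s : ZMod m → ZMod 4) (hds : ∀ i, s (i + 1) = s i + d i) (v : V' m) :
    (((FC m d).connectedComponentMk v).supp).ncard = m := by
  haveI : NeZero m := ⟨by omega⟩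
  have hsupp : ((FC m d).connectedComponentMk v).supp
      = Set.range (fun j : ZMod m => (v.1 - s v.2 + s j, j)) := by
    apply supp_eq
    · exact ⟨v.2, by simp⟩
    · intro x hx y hadj
      obtain ⟨j, rfl⟩ := hx
      rw [FC_adj hm] at hadj
      dsimp only at hadj
      rcases hadj with ⟨h1, h2⟩ | ⟨h1, h2⟩
      · refine ⟨y.2, Prod.ext_iff.mpr ⟨?_, rfl⟩⟩
        dsimp only
        rw [h1, hds]
        linear_combination -h2
      · refine ⟨y.2, Prod.ext_iff.mpr ⟨?_, rfl⟩⟩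
        dsimp only
        have hs : s j = s y.2 + d y.2 := by rw [h1, hds]
        linear_combination h2 - hs
    · intro w hw
      obtain ⟨j, rfl⟩ := hw
      have step : ∀ x : V' m, (FC m d).Adj x (x.1 + d x.2, x.2 + 1) := by
        intro x
        rw [FC_adj hm]
        exact Or.inl ⟨rfl, rfl⟩
      have iter : ∀ n : ℕ,
          (FC m d).Reachable v (v.1 - s v.2 + s (v.2 + (n : ZMod m)), v.2 + (n : ZMod m)) := by
        intro n
        induction n with
        | zero =>
          have h0 : ((v.1 - s v.2 + s (v.2 + ((0 : ℕ) : ZMod m)), v.2 + ((0 : ℕ) : ZMod m)) : V' m)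
              = v := by
            push_cast
            simp
          rw [h0]
        | succ n ih =>
          refine ih.trans ?_
          have hA := step (v.1 - s v.2 + s (v.2 + (n : ZMod m)), v.2 + (n : ZMod m))
          dsimp only at hA
          have e1 : v.2 + (((n + 1 : ℕ)) : ZMod m) = v.2 + (n : ZMod m) + 1 := by
            push_cast; ring
          have e2 : v.1 - s v.2 + s (v.2 + (((n + 1 : ℕ)) : ZMod m))
              = v.1 - s v.2 + s (v.2 + (n : ZMod m)) + d (v.2 + (n : ZMod m)) := by
            rw [e1, hds]; ring
          rw [e2, e1]
          exact hA.reachable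
      have := iter (j - v.2).val
      rwa [show v.2 + (((j - v.2).val : ℕ) : ZMod m) = j from by
        rw [ZMod.natCast_zmod_val]; ring] at this
  rw [hsupp, ← Set.image_univ,
    Set.ncard_image_of_injective _ (fun a b hab => congrArg Prod.snd hab),
    Set.ncard_univ, Nat.card_zmod]

/-! ### components of the C_4 factors -/

omit hm in
lemma ne_fst {x y : ZMod 4} {i j : ZMod m} (h : x ≠ y) : ((x, i) : V' m) ≠ (y, j) :=
  fun he => h (congrArg Prod.fst he)

lemma FB_supp_ncard (v : V' m) : (((FB m).connectedComponentMk v).supp).ncard = 4 := by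
  obtain ⟨a, i⟩ := v
  have adjFB : ∀ x y : ZMod 4, qB x y → (FB m).Adj (x, i) (y, i) := by
    intro x y h
    rw [FB_adj hm]
    exact ⟨rfl, Or.inl h⟩
  have r : ∀ c : ZMod 4, (FB m).Reachable ((0 : ZMod 4), i) (c, i) := by
    have r1 := (adjFB 0 1 (by decide)).reachable
    have r3 := r1.trans (adjFB 1 3 (by decide)).reachable
    have r2 := r3.trans (adjFB 3 2 (by decide)).reachable
    intro c
    rcases zmod4_cases c with rfl | rfl | rfl | rfl
    · rfl
    · exact r1
    · exact r2
    · exact r3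
  have hsupp : ((FB m).connectedComponentMk (a, i)).supp = {w : V' m | w.2 = i} := by
    apply supp_eq
    · rfl
    · intro x hx y hadj
      rw [FB_adj hm] at hadj
      exact hadj.1.trans hx
    · rintro ⟨b, j⟩ hw
      have hj : j = i := hw
      subst hj
      exact ((r a).symm).trans (r b)
  rw [hsupp, show {w : V' m | w.2 = i} = (fun a : ZMod 4 => ((a, i) : V' m)) '' Set.univ from ?_,
    Set.ncard_image_of_injective _ (fun a b hab => congrArg Prod.fst hab),
    Set.ncard_univ, Nat.card_zmod]
  ext ⟨b, j⟩
  simp only [Set.mem_setOf_eq, Set.image_univ, Set.mem_range, Prod.mk.injEq]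
  constructor
  · rintro rfl
    exact ⟨b, rfl, rfl⟩
  · rintro ⟨c, -, rfl⟩
    rfl

def TA (m : ℕ) (i : ZMod m) : Set (V' m) :=
  {((1 : ZMod 4), i), ((2 : ZMod 4), i), ((3 : ZMod 4), i + 1), ((0 : ZMod 4), i + 1)}

lemma FA_cell (i : ZMod m) (v : V' m) (hv : v ∈ TA m i) :
    ((FA m).connectedComponentMk v).supp = TA m i := by
  have adj12 : (FA m).Adj (1, i) (2, i) := by
    rw [FA_adj hm]; exact Or.inr (Or.inr ⟨rfl, Or.inl (show qA 1 2 by decide)⟩)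
  have adj13 : (FA m).Adj (1, i) (3, i + 1) := by
    rw [FA_adj hm]; exact Or.inl ⟨rfl, show pA 1 3 by decide⟩
  have adj30 : (FA m).Adj (3, i + 1) (0, i + 1) := by
    rw [FA_adj hm]; exact Or.inr (Or.inr ⟨rfl, Or.inr (show qA 0 3 by decide)⟩)
  have r : ∀ w ∈ TA m i, (FA m).Reachable ((1 : ZMod 4), i) w := by
    intro w hw
    rcases hw with rfl | rfl | rfl | rfl
    · rfl
    · exact adj12.reachable
    · exact adj13.reachable
    · exact adj13.reachable.trans adj30.reachable
  apply supp_eq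
  · exact hv
  · intro x hx y hadj
    have hy : y ∈ (FA m).neighborSet x := hadj
    rcases hx with rfl | rfl | rfl | rfl
    · rw [FA_nb1 hm i] at hy
      rcases hy with rfl | rfl
      · exact Or.inr (Or.inl rfl)
      · exact Or.inr (Or.inr (Or.inl rfl))
    · rw [FA_nb2 hm i] at hy
      rcases hy with rfl | rfl
      · exact Or.inl rfl
      · exact Or.inr (Or.inr (Or.inr rfl))
    · rw [FA_nb3 hm (i + 1), show i + 1 - 1 = i from by ring] at hy
      rcases hy with rfl | rfl
      · exact Or.inr (Or.inr (Or.inr rfl))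
      · exact Or.inl rfl
    · rw [FA_nb0 hm (i + 1), show i + 1 - 1 = i from by ring] at hy
      rcases hy with rfl | rfl
      · exact Or.inr (Or.inr (Or.inl rfl))
      · exact Or.inr (Or.inl rfl)
  · intro w hw
    exact ((r v hv).symm).trans (r w hw)

lemma TA_ncard (i : ZMod m) : (TA m i).ncard = 4 := by
  exact ncard4 (ne_fst (by decide)) (ne_fst (by decide)) (ne_fst (by decide))
    (ne_fst (by decide)) (ne_fst (by decide)) (ne_fst (by decide))

lemma FA_supp_ncard (v : V' m) : (((FA m).connectedComponentMk v).supp).ncard = 4 := by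
  obtain ⟨a, i⟩ := v
  rcases zmod4_cases a with rfl | rfl | rfl | rfl
  · rw [FA_cell hm (i - 1) _ (by
      right; right; right
      exact Prod.ext_iff.mpr ⟨rfl, by ring⟩)]
    exact TA_ncard hm _
  · rw [FA_cell hm i _ (Or.inl rfl)]
    exact TA_ncard hm _
  · rw [FA_cell hm i _ (Or.inr (Or.inl rfl))]
    exact TA_ncard hm _
  · rw [FA_cell hm (i - 1) _ (by
      right; right; left
      exact Prod.ext_iff.mpr ⟨rfl, by ring⟩)]
    exact TA_ncard hm _

end main

lemma disj_of {W : Type*} (A B : SimpleGraph W) (h : ∀ u v, A.Adj u v → B.Adj u v → False) :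
    A ⊓ B = ⊥ := by
  ext u v
  simp only [SimpleGraph.inf_adj, SimpleGraph.bot_adj, iff_false, not_and]
  exact fun h1 h2 => h u v h1 h2

def Fs (m : ℕ) : Fin 5 → SimpleGraph (V' m)
  | 0 => FA m
  | 1 => FB m
  | 2 => FC m (dX m)
  | 3 => FC m (dY m)
  | 4 => FC m (dZ m)

end S6

/-- For odd `m ≥ 3`, `I` is a perfect matching of `C_m[4]` and
`(C_m[4] − I) ⊕ mK_4` has a 2-factorization into two `C_4`-factors and
three `C_m`-factors. -/
theorem stmt_6 (m : ℕ) (hm : 3 ≤ m) (hmo : Odd m) :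
    IsPM (Cm4 m) (Imatch m) ∧
    ∃ F : Fin 5 → SimpleGraph (ZMod 4 × ZMod m),
      IsDecompositionF ((Cm4 m \ Imatch m) ⊔ colK4 m) F ∧
      IsCnFactor ((Cm4 m \ Imatch m) ⊔ colK4 m) (F 0) 4 ∧
      IsCnFactor ((Cm4 m \ Imatch m) ⊔ colK4 m) (F 1) 4 ∧
      IsCnFactor ((Cm4 m \ Imatch m) ⊔ colK4 m) (F 2) m ∧
      IsCnFactor ((Cm4 m \ Imatch m) ⊔ colK4 m) (F 3) m ∧
      IsCnFactor ((Cm4 m \ Imatch m) ⊔ colK4 m) (F 4) m := by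
  open S6 in
  refine ⟨⟨Imatch_le hm, Imatch_deg hm⟩, Fs m, ⟨?_, ?_, ?_⟩, ?_, ?_, ?_, ?_, ?_⟩
  · -- each factor is a subgraph
    intro k
    fin_cases k
    · exact FA_le hm
    · exact FB_le hm
    · exact FC_le hm _ (dX_vals hm)
    · exact FC_le hm _ (dY_vals hm)
    · exact FC_le hm _ (dZ_vals hm)
  · -- pairwise disjoint
    intro i j hij
    fin_cases i <;> fin_cases j <;>
      first
        | exact absurd rfl hij
        | exact disj_of _ _ (fun u v h1 h2 => HAB hm u v h1 h2)
        | exact disj_of _ _ (fun u v h1 h2 => HAB hm u v h2 h1)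
        | exact disj_of _ _ (fun u v h1 h2 => HAC hm (dX m) (dX_vals hm) u v h1 h2)
        | exact disj_of _ _ (fun u v h1 h2 => HAC hm (dX m) (dX_vals hm) u v h2 h1)
        | exact disj_of _ _ (fun u v h1 h2 => HAC hm (dY m) (dY_vals hm) u v h1 h2)
        | exact disj_of _ _ (fun u v h1 h2 => HAC hm (dY m) (dY_vals hm) u v h2 h1)
        | exact disj_of _ _ (fun u v h1 h2 => HAC hm (dZ m) (dZ_vals hm) u v h1 h2)
        | exact disj_of _ _ (fun u v h1 h2 => HAC hm (dZ m) (dZ_vals hm) u v h2 h1)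
        | exact disj_of _ _ (fun u v h1 h2 => HBC hm (dX m) u v h1 h2)
        | exact disj_of _ _ (fun u v h1 h2 => HBC hm (dX m) u v h2 h1)
        | exact disj_of _ _ (fun u v h1 h2 => HBC hm (dY m) u v h1 h2)
        | exact disj_of _ _ (fun u v h1 h2 => HBC hm (dY m) u v h2 h1)
        | exact disj_of _ _ (fun u v h1 h2 => HBC hm (dZ m) u v h1 h2)
        | exact disj_of _ _ (fun u v h1 h2 => HBC hm (dZ m) u v h2 h1)
        | exact disj_of _ _ (fun u v h1 h2 => HCC hm (dX m) (dY m) (dXY_ne hm) u v h1 h2)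
        | exact disj_of _ _ (fun u v h1 h2 => HCC hm (dX m) (dY m) (dXY_ne hm) u v h2 h1)
        | exact disj_of _ _ (fun u v h1 h2 => HCC hm (dX m) (dZ m) (dXZ_ne hm) u v h1 h2)
        | exact disj_of _ _ (fun u v h1 h2 => HCC hm (dX m) (dZ m) (dXZ_ne hm) u v h2 h1)
        | exact disj_of _ _ (fun u v h1 h2 => HCC hm (dY m) (dZ m) (dYZ_ne hm) u v h1 h2)
        | exact disj_of _ _ (fun u v h1 h2 => HCC hm (dY m) (dZ m) (dYZ_ne hm) u v h2 h1)
  · -- the sup is everything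
    ext u v
    rw [SimpleGraph.iSup_adj]
    constructor
    · rintro ⟨k, hk⟩
      revert hk
      fin_cases k
      · exact fun hk => FA_le hm hk
      · exact fun hk => FB_le hm hk
      · exact fun hk => FC_le hm _ (dX_vals hm) hk
      · exact fun hk => FC_le hm _ (dY_vals hm) hk
      · exact fun hk => FC_le hm _ (dZ_vals hm) hk
    · intro h
      rcases cover hm u v h with h' | h' | h' | h' | h'
      · exact ⟨0, h'⟩
      · exact ⟨1, h'⟩
      · exact ⟨2, h'⟩
      · exact ⟨3, h'⟩
      · exact ⟨4, h'⟩
  · exact ⟨FA_le hm, FA_deg hm, FA_supp_ncard hm⟩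
  · exact ⟨FB_le hm, FB_deg hm, FB_supp_ncard hm⟩
  · exact ⟨FC_le hm _ (dX_vals hm), FC_deg hm _, FC_supp_ncard hm _ _ (cX hm hmo)⟩
  · exact ⟨FC_le hm _ (dY_vals hm), FC_deg hm _, FC_supp_ncard hm _ _ (cY hm hmo)⟩
  · exact ⟨FC_le hm _ (dZ_vals hm), FC_deg hm _, FC_supp_ncard hm _ _ (cZ hm hmo)⟩
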